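/- arXiv:1905.09803 — 2 statements merged into one kernel-verified Lean document; each statement's English description precedes it below -/
import Mathlib

section
/- There exist three-dimensional weight configurations showing failure of inverse stability when opposite weight vectors occur: with a_1^k = (k, k, 1/k), a_2^k = (−k, k, 1/k), a_3^k = (0, −√2 k, 1/(√2 k)), c^k = (k, k, √2 k), define Γ_k with first-layer rows −a_1^k, −a_2^k, −a_3^k and Θ_k with rows a_1^k, a_2^k, a_3^k, both with output weights c^k. Then c_1^k a_1^k + c_2^k a_2^k + c_3^k a_3^k = (0, 0, 3), R(Θ_k) − R(Γ_k) is the linear map x ↦ ⟨(0,0,3), x⟩, |R(Θ_k) − R(Γ_k)|_{W^{1,∞}} = 3, and for every parametrization Φ_k of architecture (3,3,1) with R(Φ_k) = R(Θ_k) it holds ‖Φ_k − Γ_k‖_∞ ≥ k. -/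
open MeasureTheory


lemma secdiff_pt (α β t : ℝ) (ht : 0 < t) (h : α ≠ 0 → t * |β| ≤ |α|) :
    |α + t*β| + |α - t*β| = 2*|α| + (if α = 0 then 2*(t*|β|) else 0) := by
  by_cases hα : α = 0
  · subst hα
    simp [abs_mul, abs_of_pos ht]
    ring
  · simp only [hα, if_neg, ite_false, add_zero]
    have h' := h hα
    have h1 : t * β ≤ t * |β| := by
      have := le_abs_self β
      nlinarith
    have h2 : -(t * |β|) ≤ t * β := by
      have := neg_abs_le β
      nlinarith
    rcases lt_or_gt_of_ne hα with hneg | hpos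
    · rw [abs_of_neg hneg, abs_of_nonpos (by linarith [abs_of_neg hneg] : α + t*β ≤ 0),
        abs_of_nonpos (by linarith [abs_of_neg hneg] : α - t*β ≤ 0)]
      ring
    · rw [abs_of_pos hpos, abs_of_nonneg (by linarith [abs_of_pos hpos] : (0:ℝ) ≤ α + t*β),
        abs_of_nonneg (by linarith [abs_of_pos hpos] : (0:ℝ) ≤ α - t*β)]
      ring

lemma star_abstract (cc c B βB A βA : Fin 3 → ℝ)
    (h : ∀ t : ℝ, ∑ i, cc i * |B i + t * βB i| = ∑ i, c i * |A i + t * βA i|) :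
    ∑ i, (if B i = 0 then cc i * |βB i| else 0) = ∑ i, (if A i = 0 then c i * |βA i| else 0) := by
  classical
  set g : Fin 3 → ℝ := fun i =>
    min (if B i = 0 then 1 else |B i| / (|βB i| + 1))
        (if A i = 0 then 1 else |A i| / (|βA i| + 1)) with hg
  have hgpos : ∀ i, 0 < g i := by
    intro i
    apply lt_min
    · by_cases hB : B i = 0
      · simp [hB]
      · simp only [hB, if_neg, ite_false]
        apply div_pos (abs_pos.mpr hB)
        positivity
    · by_cases hA : A i = 0
      · simp [hA]
      · simp only [hA, if_neg, ite_false]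
        apply div_pos (abs_pos.mpr hA)
        positivity
  obtain ⟨t, ht, htle⟩ : ∃ t : ℝ, 0 < t ∧ ∀ i, t ≤ g i := by
    refine ⟨min (g 0) (min (g 1) (g 2)), lt_min (hgpos 0) (lt_min (hgpos 1) (hgpos 2)), ?_⟩
    intro i
    fin_cases i
    · exact min_le_left _ _
    · exact le_trans (min_le_right _ _) (min_le_left _ _)
    · exact le_trans (min_le_right _ _) (min_le_right _ _)
  have hBbd : ∀ i, B i ≠ 0 → t * |βB i| ≤ |B i| := by
    intro i hB
    have h1 : t ≤ |B i| / (|βB i| + 1) := le_trans (htle i) (by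
      rw [hg]; exact le_trans (min_le_left _ _) (by simp [hB]))
    have h2 : t * (|βB i| + 1) ≤ |B i| := by
      rw [← le_div_iff₀ (by positivity)]
      exact h1
    nlinarith [abs_nonneg (βB i)]
  have hAbd : ∀ i, A i ≠ 0 → t * |βA i| ≤ |A i| := by
    intro i hA
    have h1 : t ≤ |A i| / (|βA i| + 1) := le_trans (htle i) (by
      rw [hg]; exact le_trans (min_le_right _ _) (by simp [hA]))
    have h2 : t * (|βA i| + 1) ≤ |A i| := by
      rw [← le_div_iff₀ (by positivity)]
      exact h1
    nlinarith [abs_nonneg (βA i)]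
  have e1 := h t
  have e2 := h (-t)
  have e0 := h 0
  simp only [zero_mul, add_zero] at e0
  have eB : ∀ i, cc i * |B i + t * βB i| + cc i * |B i + (-t) * βB i|
      = 2 * (cc i * |B i|) + (if B i = 0 then (2*t) * (cc i * |βB i|) else 0) := by
    intro i
    have := secdiff_pt (B i) (βB i) t ht (hBbd i)
    have hrw : B i + (-t) * βB i = B i - t * βB i := by ring
    rw [hrw]
    by_cases hB : B i = 0
    · simp only [hB, if_pos, ite_true, zero_add, zero_sub, abs_neg, abs_mul,
        abs_of_pos ht, abs_zero]
      ring
    · rw [if_neg hB, add_zero]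
      have h2 : |B i + t * βB i| + |B i - t * βB i| = 2 * |B i| := by
        simpa [hB] using this
      linear_combination cc i * h2
  have eA : ∀ i, c i * |A i + t * βA i| + c i * |A i + (-t) * βA i|
      = 2 * (c i * |A i|) + (if A i = 0 then (2*t) * (c i * |βA i|) else 0) := by
    intro i
    have := secdiff_pt (A i) (βA i) t ht (hAbd i)
    have hrw : A i + (-t) * βA i = A i - t * βA i := by ring
    rw [hrw]
    by_cases hA : A i = 0
    · simp only [hA, if_pos, ite_true, zero_add, zero_sub, abs_neg, abs_mul,
        abs_of_pos ht, abs_zero]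
      ring
    · rw [if_neg hA, add_zero]
      have h2 : |A i + t * βA i| + |A i - t * βA i| = 2 * |A i| := by
        simpa [hA] using this
      linear_combination c i * h2
  have key : ∑ i, (if B i = 0 then (2*t) * (cc i * |βB i|) else 0)
      = ∑ i, (if A i = 0 then (2*t) * (c i * |βA i|) else 0) := by
    have lhs : ∑ i, (cc i * |B i + t * βB i| + cc i * |B i + (-t) * βB i|)
        = ∑ i, (2 * (cc i * |B i|) + (if B i = 0 then (2*t) * (cc i * |βB i|) else 0)) :=
      Finset.sum_congr rfl (fun i _ => eB i)
    have rhs : ∑ i, (c i * |A i + t * βA i| + c i * |A i + (-t) * βA i|)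
        = ∑ i, (2 * (c i * |A i|) + (if A i = 0 then (2*t) * (c i * |βA i|) else 0)) :=
      Finset.sum_congr rfl (fun i _ => eA i)
    simp only [Finset.sum_add_distrib, ← Finset.mul_sum] at lhs rhs
    linarith [lhs, rhs, e1, e2, e0]
  have h2t : (2*t) ≠ 0 := by positivity
  apply mul_left_cancel₀ h2t
  rw [Finset.mul_sum, Finset.mul_sum]
  simp only [mul_ite, mul_zero]
  exact key

lemma exists_perp (K s2 : ℝ) (hK : 0 < K) (hs2 : 0 < s2) (hs22 : s2 * s2 = 2)
    (u : Fin 3 → ℝ)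
    (h0 : ¬ ∃ lam : ℝ, lam ≠ 0 ∧ (u 0 = lam * K ∧ u 1 = lam * K ∧ u 2 = lam * (1/K)))
    (h1 : ¬ ∃ lam : ℝ, lam ≠ 0 ∧ (u 0 = lam * (-K) ∧ u 1 = lam * K ∧ u 2 = lam * (1/K)))
    (h2 : ¬ ∃ lam : ℝ, lam ≠ 0 ∧ (u 0 = lam * 0 ∧ u 1 = lam * (-(s2*K)) ∧ u 2 = lam * (1/(s2*K)))) :
    ∃ x : Fin 3 → ℝ, (u 0 * x 0 + u 1 * x 1 + u 2 * x 2 = 0) ∧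
      (K * x 0 + K * x 1 + (1/K) * x 2 ≠ 0) ∧
      (-K * x 0 + K * x 1 + (1/K) * x 2 ≠ 0) ∧
      (0 * x 0 + -(s2*K) * x 1 + (1/(s2*K)) * x 2 ≠ 0) := by
  have hKne : K ≠ 0 := ne_of_gt hK
  have hs2Kne : s2 * K ≠ 0 := by positivity
  have hKinv : K * (1/K) = 1 := by field_simp
  have hs2Kinv : (s2*K) * (1/(s2*K)) = 1 := by field_simp
  by_cases hu2 : u 2 = 0
  · set x0 : ℝ := -u 1 with hx0
    set x1 : ℝ := u 0 with hx1
    set w : ℝ := 1 + |K^2*(x0+x1)| + |K^2*(x1-x0)| + |s2^2*K^2*x1| with hw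
    have hb1 := abs_nonneg (K^2*(x0+x1))
    have hb2 := abs_nonneg (K^2*(x1-x0))
    have hb3 := abs_nonneg (s2^2*K^2*x1)
    refine ⟨![x0, x1, w], ?_, ?_, ?_, ?_⟩
    · show u 0 * x0 + u 1 * x1 + u 2 * w = 0
      rw [hu2, hx0, hx1]; ring
    · show K * x0 + K * x1 + (1/K) * w ≠ 0
      intro hEq
      have hEq2 : K^2*(x0+x1) + w = 0 := by linear_combination K * hEq - w * hKinv
      have h3 := le_abs_self (K^2*(x0+x1))
      have h4 := neg_abs_le (K^2*(x0+x1))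
      linarith
    · show -K * x0 + K * x1 + (1/K) * w ≠ 0
      intro hEq
      have hEq2 : K^2*(x1-x0) + w = 0 := by linear_combination K * hEq - w * hKinv
      have h3 := le_abs_self (K^2*(x1-x0))
      have h4 := neg_abs_le (K^2*(x1-x0))
      linarith
    · show 0 * x0 + -(s2*K) * x1 + (1/(s2*K)) * w ≠ 0
      intro hEq
      have hEq2 : -(s2^2*K^2*x1) + w = 0 := by
        linear_combination (s2*K) * hEq - w * hs2Kinv
      have h3 := le_abs_self (s2^2*K^2*x1)
      have h4 := neg_abs_le (s2^2*K^2*x1)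
      linarith
  · set P : Fin 3 → ℝ := ![u 0 - u 2 * K^2, u 0 + u 2 * K^2, u 0] with hP
    set Q : Fin 3 → ℝ := ![u 1 - u 2 * K^2, u 1 - u 2 * K^2, u 1 + 2 * u 2 * K^2] with hQ
    have hpq : ∀ j : Fin 3, ¬ (P j = 0 ∧ Q j = 0) := by
      intro j
      fin_cases j
      · rintro ⟨e1, e2⟩
        simp only [hP, hQ] at e1 e2
        simp at e1 e2
        exact h0 ⟨u 2 * K, mul_ne_zero hu2 hKne, by linear_combination e1,
          by linear_combination e2, by field_simp⟩
      · rintro ⟨e1, e2⟩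
        simp only [hP, hQ] at e1 e2
        simp at e1 e2
        exact h1 ⟨u 2 * K, mul_ne_zero hu2 hKne,
          by linear_combination e1, by linear_combination e2, by field_simp⟩
      · rintro ⟨e1, e2⟩
        simp only [hP, hQ] at e1 e2
        simp at e1 e2
        refine h2 ⟨u 2 * (s2 * K), mul_ne_zero hu2 hs2Kne, by simpa using e1, ?_, by field_simp⟩
        linear_combination e2 + u 2 * K^2 * hs22
    have hgood : ∃ s : ℝ, ∀ j : Fin 3, P j + Q j * s ≠ 0 := by
      by_contra hbad
      push_neg at hbad
      have hbad' : ∀ n : ℕ, ∃ j : Fin 3, P j + Q j * (n:ℝ) = 0 := fun n => hbad (n:ℝ)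
      choose J hJ using hbad'
      have hcard : (Finset.univ : Finset (Fin 3)).card < (Finset.range 4).card := by simp
      obtain ⟨m, hm, n, hn, hmn, hJeq⟩ :=
        Finset.exists_ne_map_eq_of_card_lt_of_maps_to hcard
          (fun n _ => Finset.mem_univ (J n))
      have e1 := hJ m
      have e2 := hJ n
      rw [hJeq] at e1
      have hmnR : (m:ℝ) ≠ (n:ℝ) := by exact_mod_cast hmn
      have hQ0 : Q (J n) = 0 := by
        have : Q (J n) * ((m:ℝ) - (n:ℝ)) = 0 := by linarith
        rcases mul_eq_zero.mp this with h | h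
        · exact h
        · exact absurd (by linarith : (m:ℝ) = (n:ℝ)) hmnR
      have hP0 : P (J n) = 0 := by rw [hQ0] at e2; linarith
      exact hpq (J n) ⟨hP0, hQ0⟩
    obtain ⟨s, hs⟩ := hgood
    set x2 : ℝ := -(u 0 * 1 + u 1 * s) / u 2 with hx2def
    have hx2u : x2 * u 2 = -(u 0 * 1 + u 1 * s) := div_mul_cancel₀ _ hu2
    refine ⟨![1, s, x2], ?_, ?_, ?_, ?_⟩
    · show u 0 * 1 + u 1 * s + u 2 * x2 = 0
      have : u 2 * x2 = x2 * u 2 := mul_comm _ _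
      rw [this, hx2u]; ring
    · show K * 1 + K * s + (1/K) * x2 ≠ 0
      intro hEq
      refine hs 0 ?_
      show P 0 + Q 0 * s = 0
      simp only [hP, hQ, Matrix.cons_val_zero]
      linear_combination (-(K * u 2)) * hEq + (K * (1/K)) * hx2u - (u 0 + u 1 * s) * hKinv
    · show -K * 1 + K * s + (1/K) * x2 ≠ 0
      intro hEq
      refine hs 1 ?_
      show P 1 + Q 1 * s = 0
      simp only [hP, hQ, Matrix.cons_val_one, Matrix.head_cons, Matrix.cons_val_zero]
      linear_combination (-(K * u 2)) * hEq + (K * (1/K)) * hx2u - (u 0 + u 1 * s) * hKinv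
    · show 0 * 1 + -(s2*K) * s + (1/(s2*K)) * x2 ≠ 0
      intro hEq
      refine hs 2 ?_
      show P 2 + Q 2 * s = 0
      simp only [hP, hQ, Matrix.cons_val_two, Matrix.tail_cons, Matrix.head_cons]
      linear_combination (-(s2*K*u 2)) * hEq + (s2*K*(1/(s2*K))) * hx2u
        - (u 0 + u 1 * s) * hs2Kinv - (K^2*u 2*s) * hs22

lemma stmt14_part1 (k : ℕ) (hk : 1 ≤ k)
    (a : Fin 3 → Fin 3 → ℝ) (c : Fin 3 → ℝ)
    (ha : a = ![![(k : ℝ), k, 1 / k], ![-(k : ℝ), k, 1 / k],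
      ![0, -(Real.sqrt 2 * k), 1 / (Real.sqrt 2 * k)]])
    (hc : c = ![(k : ℝ), k, Real.sqrt 2 * k]) :
    (∀ l : Fin 3, ∑ i, c i * a i l = if l = 2 then 3 else 0) := by
  have hk0 : (0:ℝ) < k := by exact_mod_cast hk
  have hs2' : Real.sqrt 2 * Real.sqrt 2 = 2 := Real.mul_self_sqrt (by norm_num)
  subst ha hc
  intro l
  fin_cases l <;> simp [Fin.sum_univ_three] <;>
    first | nlinarith [hs2'] | (field_simp; nlinarith [hs2'])

lemma stmt14_part2 (k : ℕ) (hk : 1 ≤ k)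
    (a : Fin 3 → Fin 3 → ℝ) (c : Fin 3 → ℝ)
    (ha : a = ![![(k : ℝ), k, 1 / k], ![-(k : ℝ), k, 1 / k],
      ![0, -(Real.sqrt 2 * k), 1 / (Real.sqrt 2 * k)]])
    (hc : c = ![(k : ℝ), k, Real.sqrt 2 * k]) :
    (∀ x : Fin 3 → ℝ,
      (∑ i, c i * max (∑ l, a i l * x l) 0) -
        (∑ i, c i * max (∑ l, (-(a i)) l * x l) 0) = 3 * x 2) := by
  have hk0 : (0:ℝ) < k := by exact_mod_cast hk
  have hs2 : (0:ℝ) < Real.sqrt 2 := Real.sqrt_pos.mpr (by norm_num)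
  have hs2' : Real.sqrt 2 * Real.sqrt 2 = 2 := Real.mul_self_sqrt (by norm_num)
  have e1 : (k:ℝ) * (1/k) = 1 := by field_simp
  have e2 : (Real.sqrt 2 * k) * (1/(Real.sqrt 2 * k)) = 1 := by field_simp
  intro x
  have key : ∀ i : Fin 3, c i * max (∑ l, a i l * x l) 0 - c i * max (∑ l, (-(a i)) l * x l) 0
      = c i * (∑ l, a i l * x l) := by
    intro i
    have h1 : (∑ l, (-(a i)) l * x l) = -(∑ l, a i l * x l) := by
      simp [Fin.sum_univ_three]
      try ring
    rw [h1, ← mul_sub, max_zero_sub_eq_self]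
  rw [← Finset.sum_sub_distrib]
  rw [Finset.sum_congr rfl (fun i _ => key i)]
  subst ha hc
  simp [Fin.sum_univ_three]
  linear_combination (-(k:ℝ)^2 * x 1) * hs2' + 2 * x 2 * e1 + x 2 * e2

set_option maxHeartbeats 1000000 in
lemma stmt14_part4 (k : ℕ) (hk : 1 ≤ k)
    (a : Fin 3 → Fin 3 → ℝ) (c : Fin 3 → ℝ)
    (ha : a = ![![(k : ℝ), k, 1 / k], ![-(k : ℝ), k, 1 / k],
      ![0, -(Real.sqrt 2 * k), 1 / (Real.sqrt 2 * k)]])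
    (hc : c = ![(k : ℝ), k, Real.sqrt 2 * k]) :
    ∀ (b : Fin 3 → Fin 3 → ℝ) (cc : Fin 3 → ℝ),
      (∀ x : Fin 3 → ℝ,
        ∑ i, cc i * max (∑ l, b i l * x l) 0 =
          ∑ i, c i * max (∑ l, a i l * x l) 0) →
      max (⨆ i, ⨆ l, |b i l - (-(a i)) l|) (⨆ i, |cc i - c i|) ≥ (k : ℝ) := by
  intro b cc hyp
  set s2 : ℝ := Real.sqrt 2 with hs2def
  have hK : (0:ℝ) < k := by exact_mod_cast hk
  have hK1 : (1:ℝ) ≤ k := by exact_mod_cast hk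
  have hKne : (k:ℝ) ≠ 0 := ne_of_gt hK
  have hs2pos : 0 < s2 := Real.sqrt_pos.mpr (by norm_num)
  have hs22 : s2 * s2 = 2 := Real.mul_self_sqrt (by norm_num)
  have hs2one : 1 ≤ s2 := by nlinarith
  have hs2Kpos : 0 < s2 * k := by positivity
  -- component lemmas
  have ha00 : a 0 0 = (k:ℝ) := by rw [ha]; simp
  have ha01 : a 0 1 = (k:ℝ) := by rw [ha]; simp
  have ha02 : a 0 2 = 1/(k:ℝ) := by rw [ha]; simp
  have ha10 : a 1 0 = -(k:ℝ) := by rw [ha]; simp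
  have ha11 : a 1 1 = (k:ℝ) := by rw [ha]; simp
  have ha12 : a 1 2 = 1/(k:ℝ) := by rw [ha]; simp
  have ha20 : a 2 0 = 0 := by rw [ha]; simp
  have ha21 : a 2 1 = -(s2 * k) := by rw [ha]; simp
  have ha22 : a 2 2 = 1/(s2 * k) := by rw [ha]; simp
  have hc0 : c 0 = (k:ℝ) := by rw [hc]; simp
  have hc1 : c 1 = (k:ℝ) := by rw [hc]; simp
  have hc2 : c 2 = s2 * k := by rw [hc]; simp
  have hsum : ∀ (u x : Fin 3 → ℝ), (∑ l, u l * x l) = u 0 * x 0 + u 1 * x 1 + u 2 * x 2 :=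
    fun u x => Fin.sum_univ_three _
  have fin3cases : ∀ i : Fin 3, i = 0 ∨ i = 1 ∨ i = 2 := by decide
  have hA0 : ∀ x : Fin 3 → ℝ, (∑ l, a 0 l * x l) = (k:ℝ) * x 0 + (k:ℝ) * x 1 + (1/(k:ℝ)) * x 2 := by
    intro x; rw [hsum, ha00, ha01, ha02]
  have hA1 : ∀ x : Fin 3 → ℝ, (∑ l, a 1 l * x l) = -(k:ℝ) * x 0 + (k:ℝ) * x 1 + (1/(k:ℝ)) * x 2 := by
    intro x; rw [hsum, ha10, ha11, ha12]
  have hA2 : ∀ x : Fin 3 → ℝ, (∑ l, a 2 l * x l) = 0 * x 0 + -(s2 * k) * x 1 + (1/(s2 * k)) * x 2 := by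
    intro x; rw [hsum, ha20, ha21, ha22]
  by_contra hcon
  push_neg at hcon
  -- extract bounds
  have hsup1 : ∀ i l, |b i l + a i l| < k := by
    intro i l
    have h1 : |b i l - (-(a i)) l| ≤ ⨆ l, |b i l - (-(a i)) l| :=
      le_ciSup (f := fun l => |b i l - (-(a i)) l|) (Set.Finite.bddAbove (Set.finite_range _)) l
    have h2 : (⨆ l, |b i l - (-(a i)) l|) ≤ ⨆ i, ⨆ l, |b i l - (-(a i)) l| :=
      le_ciSup (f := fun i => ⨆ l, |b i l - (-(a i)) l|)
        (Set.Finite.bddAbove (Set.finite_range _)) i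
    have h3 := le_max_left (⨆ i, ⨆ l, |b i l - (-(a i)) l|) (⨆ i, |cc i - c i|)
    have h4 : |b i l - (-(a i)) l| < k := lt_of_le_of_lt (h1.trans (h2.trans h3)) hcon
    simpa [sub_neg_eq_add] using h4
  have hsup2 : ∀ i, |cc i - c i| < k := by
    intro i
    have h1 : |cc i - c i| ≤ ⨆ i, |cc i - c i| :=
      le_ciSup (f := fun i => |cc i - c i|) (Set.Finite.bddAbove (Set.finite_range _)) i
    have h3 := le_max_right (⨆ i, ⨆ l, |b i l - (-(a i)) l|) (⨆ i, |cc i - c i|)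
    exact lt_of_le_of_lt (h1.trans h3) hcon
  -- positivity of cc
  have hcK : ∀ i, (k:ℝ) ≤ c i := by
    intro i
    rcases fin3cases i with rfl | rfl | rfl
    · rw [hc0]
    · rw [hc1]
    · rw [hc2]; nlinarith
  have hccpos : ∀ i, 0 < cc i := by
    intro i
    have h := abs_lt.mp (hsup2 i)
    have := hcK i
    linarith [h.1]
  -- b rows nonzero
  have hbne : ∀ i, ¬ (b i 0 = 0 ∧ b i 1 = 0 ∧ b i 2 = 0) := by
    intro i hz
    obtain ⟨hz0, hz1, hz2⟩ := hz
    rcases fin3cases i with rfl | rfl | rfl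
    · have h := hsup1 0 0
      rw [hz0, zero_add, ha00, abs_of_pos hK] at h
      exact lt_irrefl _ h
    · have h := hsup1 1 0
      rw [hz0, zero_add, ha10, abs_neg, abs_of_pos hK] at h
      exact lt_irrefl _ h
    · have h := hsup1 2 1
      rw [hz1, zero_add, ha21, abs_neg, abs_of_pos hs2Kpos] at h
      nlinarith
  -- absolute value identity
  have hmaxabs : ∀ t : ℝ, max t 0 + max (-t) 0 = |t| := by
    intro t
    rcases le_total 0 t with h | h
    · rw [max_eq_left h, max_eq_right (neg_nonpos.mpr h), abs_of_nonneg h]; ring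
    · rw [max_eq_right h, max_eq_left (neg_nonneg.mpr h), abs_of_nonpos h]; ring
  have habs : ∀ x : Fin 3 → ℝ,
      ∑ i, cc i * |∑ l, b i l * x l| = ∑ i, c i * |∑ l, a i l * x l| := by
    intro x
    have h1 := hyp x
    have hneg : ∀ u : Fin 3 → ℝ, (∑ l, u l * (-x) l) = -(∑ l, u l * x l) := by
      intro u
      simp only [Pi.neg_apply, hsum]
      ring
    have h2 : ∑ i, cc i * max (-(∑ l, b i l * x l)) 0
        = ∑ i, c i * max (-(∑ l, a i l * x l)) 0 := by
      have := hyp (-x)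
      simpa only [hneg] using this
    have e1 : ∑ i, cc i * |∑ l, b i l * x l|
        = ∑ i, (cc i * max (∑ l, b i l * x l) 0 + cc i * max (-(∑ l, b i l * x l)) 0) :=
      Finset.sum_congr rfl (fun i _ => by rw [← mul_add, hmaxabs])
    have e2 : ∑ i, c i * |∑ l, a i l * x l|
        = ∑ i, (c i * max (∑ l, a i l * x l) 0 + c i * max (-(∑ l, a i l * x l)) 0) :=
      Finset.sum_congr rfl (fun i _ => by rw [← mul_add, hmaxabs])
    rw [e1, e2, Finset.sum_add_distrib, Finset.sum_add_distrib, h1, h2]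
  -- kink matching
  have hstar : ∀ x₀ v : Fin 3 → ℝ,
      ∑ i, (if (∑ l, b i l * x₀ l) = 0 then cc i * |∑ l, b i l * v l| else 0)
        = ∑ i, (if (∑ l, a i l * x₀ l) = 0 then c i * |∑ l, a i l * v l| else 0) := by
    intro x₀ v
    refine star_abstract cc c (fun i => ∑ l, b i l * x₀ l) (fun i => ∑ l, b i l * v l)
      (fun i => ∑ l, a i l * x₀ l) (fun i => ∑ l, a i l * v l) ?_
    intro t
    have h := habs (fun l => x₀ l + t * v l)
    have hexp : ∀ u : Fin 3 → ℝ,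
        (∑ l, u l * (fun l => x₀ l + t * v l) l) = (∑ l, u l * x₀ l) + t * (∑ l, u l * v l) := by
      intro u
      simp only [hsum]
      ring
    simpa only [hexp] using h
  -- parallelism
  have hpar : ∀ i, ∃ (j : Fin 3) (lam : ℝ), lam ≠ 0 ∧
      (b i 0 = lam * a j 0 ∧ b i 1 = lam * a j 1 ∧ b i 2 = lam * a j 2) := by
    intro i
    by_contra hno
    obtain ⟨x₀, hx0, hA0ne, hA1ne, hA2ne⟩ := exists_perp (k:ℝ) s2 hK hs2pos hs22 (b i)
      (fun ⟨lam, hl, e0, e1, e2⟩ => hno ⟨0, lam, hl,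
        by rw [ha00]; exact e0, by rw [ha01]; exact e1, by rw [ha02]; exact e2⟩)
      (fun ⟨lam, hl, e0, e1, e2⟩ => hno ⟨1, lam, hl,
        by rw [ha10]; exact e0, by rw [ha11]; exact e1, by rw [ha12]; exact e2⟩)
      (fun ⟨lam, hl, e0, e1, e2⟩ => hno ⟨2, lam, hl,
        by rw [ha20]; simpa using e0, by rw [ha21]; exact e1, by rw [ha22]; exact e2⟩)
    have hzero : ∀ v : Fin 3 → ℝ, cc i * |∑ l, b i l * v l| = 0 := by
      intro v
      have h := hstar x₀ v
      have hRHS : ∑ j, (if (∑ l, a j l * x₀ l) = 0 then c j * |∑ l, a j l * v l| else 0) = 0 := by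
        apply Finset.sum_eq_zero
        intro j _
        rcases fin3cases j with rfl | rfl | rfl
        · rw [if_neg (by rw [hA0]; exact hA0ne)]
        · rw [if_neg (by rw [hA1]; exact hA1ne)]
        · rw [if_neg (by rw [hA2]; exact hA2ne)]
      rw [hRHS] at h
      have hnn : ∀ i' ∈ Finset.univ, (0:ℝ) ≤
          (if (∑ l, b i' l * x₀ l) = 0 then cc i' * |∑ l, b i' l * v l| else 0) := by
        intro i' _
        split
        · exact mul_nonneg (le_of_lt (hccpos i')) (abs_nonneg _)
        · exact le_refl 0
      have h0 := (Finset.sum_eq_zero_iff_of_nonneg hnn).mp h i (Finset.mem_univ i)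
      rwa [if_pos (by rw [hsum]; exact hx0)] at h0
    have hb0 : ∀ m : Fin 3, b i m = 0 := by
      intro m
      have h := hzero (Pi.single m 1)
      have h2 : (∑ l, b i l * (Pi.single m 1 : Fin 3 → ℝ) l) = b i m := by
        rcases fin3cases m with rfl | rfl | rfl <;> simp [Fin.sum_univ_three, Pi.single_apply]
      rw [h2] at h
      rcases mul_eq_zero.mp h with h' | h'
      · exact absurd h' (ne_of_gt (hccpos i))
      · exact abs_eq_zero.mp h'
    exact hbne i ⟨hb0 0, hb0 1, hb0 2⟩
  choose jmap lam hlam hcomp using hpar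
  -- evaluation point
  set xs : Fin 3 → ℝ := ![0, -s2/(3*(k:ℝ)), s2*(k:ℝ)/3] with hxs
  have hxs0 : xs 0 = 0 := by rw [hxs]; simp
  have hxs1 : xs 1 = -s2/(3*(k:ℝ)) := by rw [hxs]; simp
  have hxs2 : xs 2 = s2*(k:ℝ)/3 := by rw [hxs]; simp
  have hxsA : ∀ j : Fin 3, (∑ l, a j l * xs l) = if j = 2 then 1 else 0 := by
    intro j
    rcases fin3cases j with rfl | rfl | rfl
    · rw [hA0, hxs0, hxs1, hxs2, if_neg (by decide)]
      field_simp
      ring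
    · rw [hA1, hxs0, hxs1, hxs2, if_neg (by decide)]
      field_simp
      ring
    · rw [hA2, hxs0, hxs1, hxs2, if_pos rfl]
      field_simp
      linear_combination hs22
  have hbxs : ∀ i, (∑ l, b i l * xs l) = lam i * (if jmap i = 2 then 1 else 0) := by
    intro i
    rw [hsum, (hcomp i).1, (hcomp i).2.1, (hcomp i).2.2, ← hxsA (jmap i), hsum (a (jmap i))]
    ring
  have hev := hyp xs
  have hRHSval : ∑ i, c i * max (∑ l, a i l * xs l) 0 = s2 * k := by
    rw [Fin.sum_univ_three, hxsA 0, hxsA 1, hxsA 2]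
    rw [if_neg (by decide), if_neg (by decide), if_pos rfl, hc2]
    simp
  have hwit : ∃ i, jmap i = 2 ∧ 0 < lam i := by
    by_contra hno
    push_neg at hno
    have hz : ∑ i, cc i * max (∑ l, b i l * xs l) 0 = 0 := by
      apply Finset.sum_eq_zero
      intro i _
      rw [hbxs i]
      by_cases hj : jmap i = 2
      · rw [if_pos hj, mul_one, max_eq_right (hno i hj), mul_zero]
      · rw [if_neg hj, mul_zero]
        simp
    rw [hz, hRHSval] at hev
    nlinarith
  obtain ⟨i, hji, hlpos⟩ := hwit
  rcases fin3cases i with rfl | rfl | rfl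
  · have h := hsup1 0 0
    have hb00 : b 0 0 = 0 := by
      rw [(hcomp 0).1, hji, ha20, mul_zero]
    rw [hb00, zero_add, ha00, abs_of_pos hK] at h
    exact lt_irrefl _ h
  · have h := hsup1 1 0
    have hb10 : b 1 0 = 0 := by
      rw [(hcomp 1).1, hji, ha20, mul_zero]
    rw [hb10, zero_add, ha10, abs_neg, abs_of_pos hK] at h
    exact lt_irrefl _ h
  · have h := hsup1 2 1
    have hb21 : b 2 1 + a 2 1 = -((lam 2 + 1) * (s2 * k)) := by
      rw [(hcomp 2).2.1, hji, ha21]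
      ring
    have hposlam : (0:ℝ) < lam 2 + 1 := by linarith
    have habs' : |(lam 2 + 1) * (s2 * (k:ℝ))| = (lam 2 + 1) * (s2 * (k:ℝ)) :=
      abs_of_pos (mul_pos hposlam hs2Kpos)
    rw [hb21, abs_neg, habs'] at h
    nlinarith [mul_pos hlpos hs2Kpos]

/-- The Sobolev `W^{1,∞}` seminorm: essential supremum of the max-norm of the
(a.e.) gradient. -/
noncomputable def sobSemi (d : ℕ) (f : (Fin d → ℝ) → ℝ) : ℝ :=
  essSup (fun x : Fin d → ℝ => ⨆ j : Fin d, |fderiv ℝ f x (Pi.single j 1)|) volume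


lemma stmt14_sob (f : (Fin 3 → ℝ) → ℝ) (hf : ∀ x, f x = 3 * x 2) : sobSemi 3 f = 3 := by
  have hfe : f = fun x => 3 * x 2 := funext hf
  subst hfe
  unfold sobSemi
  have hder : ∀ (x : Fin 3 → ℝ) (j : Fin 3),
      fderiv ℝ (fun x : Fin 3 → ℝ => 3 * x 2) x (Pi.single j 1) = if j = 2 then (3:ℝ) else 0 := by
    intro x j
    have h : HasFDerivAt (fun x : Fin 3 → ℝ => 3 * x 2)
        ((3:ℝ) • (ContinuousLinearMap.proj 2 : (Fin 3 → ℝ) →L[ℝ] ℝ)) x := by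
      simpa using ((ContinuousLinearMap.proj (R := ℝ) (φ := fun _ : Fin 3 => ℝ)
        2).hasFDerivAt (x := x)).const_mul (3:ℝ)
    rw [h.fderiv]
    by_cases hj : j = 2 <;> simp [hj, Pi.single_apply]
  have hsup : (fun x : Fin 3 → ℝ =>
      ⨆ j : Fin 3, |fderiv ℝ (fun x : Fin 3 → ℝ => 3 * x 2) x (Pi.single j 1)|)
      = fun _ => (3:ℝ) := by
    funext x
    simp only [hder]
    apply le_antisymm
    · apply ciSup_le
      intro j
      by_cases hj : j = 2 <;> simp [hj]
    · have := le_ciSup (f := fun j : Fin 3 => |if j = 2 then (3:ℝ) else 0|)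
        (Set.Finite.bddAbove (Set.finite_range _)) 2
      simpa using this
  rw [hsup]
  apply essSup_const
  intro h
  have := congrArg (fun μ : MeasureTheory.Measure (Fin 3 → ℝ) => μ Set.univ) h
  simp at this

/-- Failure of inverse stability due to opposite weight vectors (Example 2.6):
with `a₁ᵏ = (k,k,1/k)`, `a₂ᵏ = (−k,k,1/k)`, `a₃ᵏ = (0,−√2k,1/(√2k))` and
`cᵏ = (k,k,√2k)`, the networks `Θ_k` (rows `a_iᵏ`) and `Γ_k` (rows `−a_iᵏ`)
satisfy `∑ c_i a_i = (0,0,3)`, their realizations differ by the linear map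
`x ↦ 3x₃` with Sobolev seminorm `3`, yet every parametrization of `R(Θ_k)` is
at parameter distance at least `k` from `Γ_k`. -/
theorem stmt_14 (k : ℕ) (hk : 1 ≤ k)
    (a : Fin 3 → Fin 3 → ℝ) (c : Fin 3 → ℝ)
    (ha : a = ![![(k : ℝ), k, 1 / k], ![-(k : ℝ), k, 1 / k],
      ![0, -(Real.sqrt 2 * k), 1 / (Real.sqrt 2 * k)]])
    (hc : c = ![(k : ℝ), k, Real.sqrt 2 * k]) :
    (∀ l : Fin 3, ∑ i, c i * a i l = if l = 2 then 3 else 0) ∧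
    (∀ x : Fin 3 → ℝ,
      (∑ i, c i * max (∑ l, a i l * x l) 0) -
        (∑ i, c i * max (∑ l, (-(a i)) l * x l) 0) = 3 * x 2) ∧
    sobSemi 3 (fun x =>
      (∑ i, c i * max (∑ l, a i l * x l) 0) -
        ∑ i, c i * max (∑ l, (-(a i)) l * x l) 0) = 3 ∧
    ∀ (b : Fin 3 → Fin 3 → ℝ) (cc : Fin 3 → ℝ),
      (∀ x : Fin 3 → ℝ,
        ∑ i, cc i * max (∑ l, b i l * x l) 0 =
          ∑ i, c i * max (∑ l, a i l * x l) 0) →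
      max (⨆ i, ⨆ l, |b i l - (-(a i)) l|) (⨆ i, |cc i - c i|) ≥ (k : ℝ) :=
  ⟨stmt14_part1 k hk a c ha hc, stmt14_part2 k hk a c ha hc,
   stmt14_sob _ (stmt14_part2 k hk a c ha hc), stmt14_part4 k hk a c ha hc⟩
end

section
/- Let Γ_k = ((k,0), 1/k²) ∈ ℝ^{1×2} × ℝ, whose realization is x ↦ (1/k²)·ReLU(k x₁) = (1/k)·ReLU(x₁), and let g_k(x) = (1/k)·ReLU(x₂). Then for every parametrization Φ_k of g_k (necessarily of the form (c)·ReLU(⟨(0,a),x⟩) with a, c > 0, ac = 1/k), it holds that |g_k − R(Γ_k)|_{W^{1,∞}} ≤ 1/k while ‖Φ_k − Γ_k‖_∞ ≥ k. -/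
open MeasureTheory

lemma hyperplane_null (i : Fin 2) : volume {x : Fin 2 → ℝ | x i = 0} = 0 := by
  have : {x : Fin 2 → ℝ | x i = 0}
      = (LinearMap.ker (LinearMap.proj i : (Fin 2 → ℝ) →ₗ[ℝ] ℝ) : Set (Fin 2 → ℝ)) := by
    ext x; simp [LinearMap.mem_ker]
  rw [this]
  apply MeasureTheory.Measure.addHaar_submodule
  intro h
  have h1 : (Pi.single i 1 : Fin 2 → ℝ) ∈
      LinearMap.ker (LinearMap.proj i : (Fin 2 → ℝ) →ₗ[ℝ] ℝ) := h ▸ Submodule.mem_top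
  simp [LinearMap.mem_ker] at h1

/-- Failure of inverse stability due to unbalancedness: `Γ_k = ((k,0),1/k²)`
realizes `x ↦ (1/k)ReLU(x₁)`, and `g_k(x) = (1/k)ReLU(x₂)` is Sobolev-close to
it, yet every parametrization `(a,c)` of `g_k` satisfies
`‖Φ_k − Γ_k‖_∞ ≥ k`. -/
theorem stmt_15 (k : ℕ) (hk : 1 ≤ k) (a : Fin 2 → ℝ) (c : ℝ)
    (hreal : ∀ x : Fin 2 → ℝ,
      c * max (a 0 * x 0 + a 1 * x 1) 0 = (1 / (k : ℝ)) * max (x 1) 0) :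
    sobSemi 2 (fun x =>
        (1 / (k : ℝ)) * max (x 1) 0 - (1 / (k : ℝ) ^ 2) * max ((k : ℝ) * x 0) 0) ≤ 1 / k ∧
      max (max |a 0 - k| |a 1|) |c - 1 / (k : ℝ) ^ 2| ≥ (k : ℝ) := by
  have hkpos : (0 : ℝ) < k := by exact_mod_cast hk
  have hkne : (k : ℝ) ≠ 0 := ne_of_gt hkpos
  constructor
  · -- Sobolev bound
    set f : (Fin 2 → ℝ) → ℝ := fun x =>
      (1 / (k : ℝ)) * max (x 1) 0 - (1 / (k : ℝ) ^ 2) * max ((k : ℝ) * x 0) 0 with hf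
    -- a.e. bound on the gradient
    have key : ∀ x : Fin 2 → ℝ, x 0 ≠ 0 → x 1 ≠ 0 →
        (⨆ j : Fin 2, |fderiv ℝ f x (Pi.single j 1)|) ≤ 1 / k := by
      intro x hx0 hx1
      set α : ℝ := if 0 < x 0 then -(1 / (k : ℝ)) else 0 with hα
      set β : ℝ := if 0 < x 1 then 1 / (k : ℝ) else 0 with hβ
      set L : (Fin 2 → ℝ) →L[ℝ] ℝ :=
        α • (ContinuousLinearMap.proj 0) + β • (ContinuousLinearMap.proj 1) with hL
      have hev0 : ∀ᶠ y in nhds x, (1 / (k : ℝ) ^ 2) * max ((k : ℝ) * y 0) 0 = -(α * y 0) := by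
        rcases hx0.lt_or_gt with h | h
        · have : ∀ᶠ y in nhds x, y 0 < 0 :=
            (isOpen_lt (continuous_apply 0) continuous_const).eventually_mem h
          filter_upwards [this] with y hy
          rw [max_eq_right (by nlinarith), hα, if_neg (not_lt.mpr h.le)]
          ring
        · have : ∀ᶠ y in nhds x, 0 < y 0 :=
            (isOpen_lt continuous_const (continuous_apply 0)).eventually_mem h
          filter_upwards [this] with y hy
          rw [max_eq_left (by positivity), hα, if_pos h]
          field_simp
      have hev1 : ∀ᶠ y in nhds x, (1 / (k : ℝ)) * max (y 1) 0 = β * y 1 := by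
        rcases hx1.lt_or_gt with h | h
        · have : ∀ᶠ y in nhds x, y 1 < 0 :=
            (isOpen_lt (continuous_apply 1) continuous_const).eventually_mem h
          filter_upwards [this] with y hy
          rw [max_eq_right hy.le, hβ, if_neg (not_lt.mpr h.le)]
          ring
        · have : ∀ᶠ y in nhds x, 0 < y 1 :=
            (isOpen_lt continuous_const (continuous_apply 1)).eventually_mem h
          filter_upwards [this] with y hy
          rw [max_eq_left hy.le, hβ, if_pos h]
      have hevf : f =ᶠ[nhds x] fun y => L y := by
        filter_upwards [hev0, hev1] with y h0 h1
        simp only [hf, h0, h1, hL, ContinuousLinearMap.add_apply,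
          ContinuousLinearMap.smul_apply, ContinuousLinearMap.proj_apply, smul_eq_mul]
        ring
      have hD : fderiv ℝ f x = L := by
        rw [Filter.EventuallyEq.fderiv_eq hevf]
        exact L.fderiv
      have habs : ∀ j : Fin 2, |fderiv ℝ f x (Pi.single j 1)| ≤ 1 / k := by
        intro j
        rw [hD]
        fin_cases j <;>
          simp [hL, ContinuousLinearMap.proj_apply, Pi.single_eq_same,
            Pi.single_eq_of_ne (by norm_num : (0 : Fin 2) ≠ 1),
            Pi.single_eq_of_ne (by norm_num : (1 : Fin 2) ≠ 0)] <;>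
          · rcases le_total 0 (x 0) with h | h <;> rcases le_total 0 (x 1) with h' | h' <;>
              simp [hα, hβ] <;> split <;>
              simp [abs_of_nonneg, abs_neg, abs_of_nonneg (by positivity : (0:ℝ) ≤ 1 / (k:ℝ))] <;>
              positivity
      exact Real.iSup_le habs (by positivity)
    have hnull : volume ({x : Fin 2 → ℝ | x 0 = 0} ∪ {x : Fin 2 → ℝ | x 1 = 0}) = 0 :=
      measure_union_null (hyperplane_null 0) (hyperplane_null 1)
    have hae : ∀ᵐ x : Fin 2 → ℝ,
        (⨆ j : Fin 2, |fderiv ℝ f x (Pi.single j 1)|) ≤ 1 / k := by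
      rw [MeasureTheory.ae_iff]
      apply measure_mono_null _ hnull
      intro x hx
      simp only [Set.mem_setOf_eq, not_le] at hx
      by_contra hmem
      simp only [Set.mem_union, Set.mem_setOf_eq, not_or] at hmem
      exact absurd (key x hmem.1 hmem.2) (not_le.mpr hx)
    rw [sobSemi, essSup]
    have hcob : Filter.IsCoboundedUnder (· ≤ ·) (ae volume)
        (fun x : Fin 2 → ℝ => ⨆ j : Fin 2, |fderiv ℝ f x (Pi.single j 1)|) :=
      Filter.isCoboundedUnder_le_of_le _ (x := 0)
        (fun x => Real.iSup_nonneg fun j => abs_nonneg _)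
    exact Filter.limsup_le_of_le hcob hae
  · -- parameter distance
    have h1 := hreal ![0, 1]
    have h2 := hreal ![1, 0]
    have h3 := hreal ![-1, 0]
    simp [Matrix.cons_val_zero, Matrix.cons_val_one, Matrix.head_cons] at h1 h2 h3
    have hcne : c ≠ 0 := by
      intro hc
      rw [hc, zero_mul] at h1
      have : (0 : ℝ) < (↑k)⁻¹ := by positivity
      linarith [h1.symm ▸ this]
    have ha0 : a 0 = 0 :=
      le_antisymm (h2.resolve_left hcne) (h3.resolve_left hcne)
    calc (k : ℝ) = |a 0 - k| := by rw [ha0]; rw [abs_of_nonpos (by linarith)]; ring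
    _ ≤ max (max |a 0 - k| |a 1|) |c - 1 / (k : ℝ) ^ 2| :=
        le_max_of_le_left (le_max_left _ _)
end
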